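/- Let E be a finite-dimensional real inner product space, τ > 0, and t ↦ R_t a continuous family of self-adjoint operators on E. If t₀ ∈ (0,τ] is such that 0 and t₀ are mutually conjugate, then there exists ε > 0 such that for every t ∈ [t₀-ε, t₀+ε] ∩ (0,τ] with t ≠ t₀, the points 0 and t are not mutually conjugate. -/

import Mathlib

open scoped RealInnerProductSpace

variable {E : Type*} [NormedAddCommGroup E] [InnerProductSpace ℝ E]

/-- `f : ℝ → E` is continuous on `[a,b]` and piecewise `C^n` there, i.e. there is a
finite partition `a = s₀ < s₁ < ⋯ < s_k = b` such that `f` is `C^n` on each closed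
subinterval `[sᵢ, sᵢ₊₁]` (derivatives being taken one-sidedly at the endpoints). -/
def PiecewiseContDiffOn (n : ℕ) (f : ℝ → E) (a b : ℝ) : Prop :=
  ContinuousOn f (Set.Icc a b) ∧
  ∃ (k : ℕ) (s : Fin (k + 1) → ℝ), StrictMono s ∧ s 0 = a ∧ s (Fin.last k) = b ∧
    ∀ i : Fin k, ContDiffOn ℝ (n : ℕ∞) f (Set.Icc (s i.castSucc) (s i.succ))

/-- Membership in the space `Ω([0,τ],E)` of continuous piecewise `C²` curves
`v : [0,τ] → E` with `v 0 ∈ E₀`, `⟪v' 0, w⟫ = -Q (v 0) w` for all `w ∈ E₀`, and `v τ = 0`. -/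
def InOmega (E₀ : Submodule ℝ E) (Q : E →ₗ[ℝ] E →ₗ[ℝ] ℝ) (τ : ℝ) (v : ℝ → E) : Prop :=
  PiecewiseContDiffOn 2 v 0 τ ∧ v 0 ∈ E₀ ∧
  (∀ w ∈ E₀, ⟪derivWithin v (Set.Icc 0 τ) 0, w⟫ = -(Q (v 0) w)) ∧
  v τ = 0

/-- The index form `I(v) = -Q(v 0, v 0) + ∫₀^τ (⟪v', v'⟫ - ⟪R_t (v t), v t⟫) dt`. -/
noncomputable def indexForm (R : ℝ → E →L[ℝ] E) (Q : E →ₗ[ℝ] E →ₗ[ℝ] ℝ) (τ : ℝ)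
    (v : ℝ → E) : ℝ :=
  -(Q (v 0) (v 0)) + ∫ t in (0:ℝ)..τ,
    (⟪derivWithin v (Set.Icc 0 τ) t, derivWithin v (Set.Icc 0 τ) t⟫ - ⟪R t (v t), v t⟫)

/-- A `C²` curve `u : [0,a] → E` with `u'' + R_t u = 0` on `[0,a]`, `u 0 ∈ E₀`,
`⟪u' 0, w⟫ = -Q (u 0) w` for all `w ∈ E₀`, and `u a = 0`. -/
def IsFocalSolution (R : ℝ → E →L[ℝ] E) (E₀ : Submodule ℝ E) (Q : E →ₗ[ℝ] E →ₗ[ℝ] ℝ)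
    (a : ℝ) (u : ℝ → E) : Prop :=
  ContDiffOn ℝ 2 u (Set.Icc 0 a) ∧
  (∀ t ∈ Set.Icc 0 a,
    derivWithin (derivWithin u (Set.Icc 0 a)) (Set.Icc 0 a) t + R t (u t) = 0) ∧
  u 0 ∈ E₀ ∧
  (∀ w ∈ E₀, ⟪derivWithin u (Set.Icc 0 a) 0, w⟫ = -(Q (u 0) w)) ∧
  u a = 0

/-- `a ∈ (0,τ]` is a focal point for `J = d²/dt² + R_t` and boundary condition `(E₀, Q)`
if there is a nontrivial solution on `[0,a]`. -/
def IsFocalPoint (R : ℝ → E →L[ℝ] E) (E₀ : Submodule ℝ E) (Q : E →ₗ[ℝ] E →ₗ[ℝ] ℝ)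
    (τ a : ℝ) : Prop :=
  a ∈ Set.Ioc 0 τ ∧
  ∃ u : ℝ → E, IsFocalSolution R E₀ Q a u ∧ ∃ t ∈ Set.Icc 0 a, u t ≠ 0

/-- The multiplicity of a focal point: the maximal number of focal solutions on `[0,a]`
that are linearly independent as curves on `[0,a]`. -/
noncomputable def focalMultiplicity (R : ℝ → E →L[ℝ] E) (E₀ : Submodule ℝ E)
    (Q : E →ₗ[ℝ] E →ₗ[ℝ] ℝ) (a : ℝ) : ℕ :=
  sSup {n : ℕ | ∃ u : Fin n → ℝ → E,
    (∀ i, IsFocalSolution R E₀ Q a (u i)) ∧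
    ∀ c : Fin n → ℝ, (∀ t ∈ Set.Icc 0 a, (∑ i, c i • u i t) = 0) → c = 0}

/-- The set of `n` such that there are `n` elements of `Ω([0,τ],E)`, linearly independent
as curves on `[0,τ]`, on (the span of) which the index form is negative.  The Morse index
of the index form is the supremum of this set. -/
def MorseIndexSet (R : ℝ → E →L[ℝ] E) (E₀ : Submodule ℝ E) (Q : E →ₗ[ℝ] E →ₗ[ℝ] ℝ)
    (τ : ℝ) : Set ℕ :=
  {n | ∃ v : Fin n → ℝ → E,
    (∀ i, InOmega E₀ Q τ (v i)) ∧
    (∀ c : Fin n → ℝ, (∀ t ∈ Set.Icc 0 τ, (∑ i, c i • v i t) = 0) → c = 0) ∧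
    (∀ c : Fin n → ℝ, c ≠ 0 → indexForm R Q τ (fun t => ∑ i, c i • v i t) < 0)}

/-- `J = d²/dt² + R_t` is disconjugate on a set `s ⊆ ℝ`: no nontrivial `C²` solution of
`u'' + R_t u = 0` on `s` vanishes at two distinct points of `s`. -/
def DisconjugateOn (R : ℝ → E →L[ℝ] E) (s : Set ℝ) : Prop :=
  ∀ u : ℝ → E, ContDiffOn ℝ 2 u s →
    (∀ t ∈ s, derivWithin (derivWithin u s) s t + R t (u t) = 0) →
    ∀ s₁ ∈ s, ∀ s₂ ∈ s, s₁ ≠ s₂ → u s₁ = 0 → u s₂ = 0 → ∀ t ∈ s, u t = 0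

/-- `a < b` are mutually conjugate if there is a not-identically-zero `C²` solution of
`v'' + R_t v = 0` on `[a,b]` with `v a = v b = 0`. -/
def MutuallyConjugate (R : ℝ → E →L[ℝ] E) (a b : ℝ) : Prop :=
  a < b ∧ ∃ v : ℝ → E, ContDiffOn ℝ 2 v (Set.Icc a b) ∧
    (∀ t ∈ Set.Icc a b,
      derivWithin (derivWithin v (Set.Icc a b)) (Set.Icc a b) t + R t (v t) = 0) ∧
    v a = 0 ∧ v b = 0 ∧ ∃ t ∈ Set.Icc a b, v t ≠ 0

section ConjAux
open Set Real

section
variable {F : Type*} [NormedAddCommGroup F] [NormedSpace ℝ F]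

lemma gron_fwd {g g' : ℝ → F} {K a b : ℝ} (hab : a ≤ b)
    (hg : ∀ t ∈ Icc a b, HasDerivWithinAt g (g' t) (Icc a b) t)
    (hb : ∀ t ∈ Icc a b, ‖g' t‖ ≤ K * ‖g t‖) :
    ‖g b‖ ≤ Real.exp (K * (b - a)) * ‖g a‖ := by
  have hcont : ContinuousOn g (Icc a b) := fun t ht => (hg t ht).continuousWithinAt
  have h := norm_le_gronwallBound_of_norm_deriv_right_le (δ := ‖g a‖) (K := K) (ε := 0)
    hcont (fun x hx => (hg x (Ico_subset_Icc_self hx)).mono_of_mem_nhdsWithin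
      (Icc_mem_nhdsGE_of_mem hx))
    le_rfl (fun x hx => by simpa using hb x (Ico_subset_Icc_self hx)) b ⟨hab, le_rfl⟩
  rwa [gronwallBound_ε0, mul_comm ‖g a‖] at h

lemma gron_bwd {g g' : ℝ → F} {K a b : ℝ} (hab : a ≤ b)
    (hg : ∀ t ∈ Icc a b, HasDerivWithinAt g (g' t) (Icc a b) t)
    (hb : ∀ t ∈ Icc a b, ‖g' t‖ ≤ K * ‖g t‖) :
    ‖g a‖ ≤ Real.exp (K * (b - a)) * ‖g b‖ := by
  set φ : ℝ → ℝ := fun s => a + b - s with hφ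
  have hmaps : MapsTo φ (Icc a b) (Icc a b) := fun s hs =>
    ⟨by simp [hφ]; linarith [hs.2], by simp [hφ]; linarith [hs.1]⟩
  have hgc : ∀ s ∈ Icc a b, HasDerivWithinAt (g ∘ φ) ((-1 : ℝ) • g' (φ s)) (Icc a b) s := by
    intro s hs
    exact (hg (φ s) (hmaps hs)).scomp s
      (((hasDerivAt_id s).const_sub (a + b)).hasDerivWithinAt) hmaps
  have h := gron_fwd hab hgc (fun t ht => by simpa using hb (φ t) (hmaps ht))
  simpa [hφ] using h
end

section
variable {E : Type*} [NormedAddCommGroup E] [InnerProductSpace ℝ E]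
variable {R : ℝ → E →L[ℝ] E} {a b τ M : ℝ} {u v : ℝ → E}

lemma sol_hasDeriv1 (hu : ContDiffOn ℝ 2 u (Icc 0 a)) :
    ∀ t ∈ Icc 0 a, HasDerivWithinAt u (derivWithin u (Icc 0 a) t) (Icc 0 a) t := by
  intro t ht
  exact ((hu.differentiableOn (by norm_num)) t ht).hasDerivWithinAt

lemma sol_hasDeriv2 (ha : 0 < a) (hu : ContDiffOn ℝ 2 u (Icc 0 a))
    (heq : ∀ t ∈ Icc 0 a,
      derivWithin (derivWithin u (Icc 0 a)) (Icc 0 a) t + R t (u t) = 0) :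
    ∀ t ∈ Icc 0 a,
      HasDerivWithinAt (derivWithin u (Icc 0 a)) (-(R t (u t))) (Icc 0 a) t := by
  intro t ht
  have h := (((hu.derivWithin (m := 1) (uniqueDiffOn_Icc ha) (by norm_num)).differentiableOn
    (by norm_num)) t ht).hasDerivWithinAt
  have he : derivWithin (derivWithin u (Icc 0 a)) (Icc 0 a) t = -(R t (u t)) :=
    eq_neg_of_add_eq_zero_left (heq t ht)
  rwa [he] at h

/-- The Wronskian identity: for two solutions vanishing at `0`,
`⟪u' σ, v σ⟫ = ⟪u σ, v' σ⟫`. -/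
lemma sol_wronskian
    (hRsa : ∀ t ∈ Icc (0:ℝ) τ, ∀ x y : E, ⟪R t x, y⟫ = ⟪x, R t y⟫)
    (ha : 0 < a) (hab : a ≤ b) (hbτ : b ≤ τ)
    (hu : ContDiffOn ℝ 2 u (Icc 0 a))
    (hequ : ∀ t ∈ Icc 0 a,
      derivWithin (derivWithin u (Icc 0 a)) (Icc 0 a) t + R t (u t) = 0)
    (hv : ContDiffOn ℝ 2 v (Icc 0 b))
    (heqv : ∀ t ∈ Icc 0 b,
      derivWithin (derivWithin v (Icc 0 b)) (Icc 0 b) t + R t (v t) = 0)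
    (hu0 : u 0 = 0) (hv0 : v 0 = 0) :
    ∀ σ ∈ Icc 0 a,
      ⟪derivWithin u (Icc 0 a) σ, v σ⟫ = ⟪u σ, derivWithin v (Icc 0 b) σ⟫ := by
  have hb : (0:ℝ) < b := lt_of_lt_of_le ha hab
  have hsub : Icc (0:ℝ) a ⊆ Icc 0 b := Icc_subset_Icc le_rfl hab
  set ud := derivWithin u (Icc 0 a) with hud
  set vd := derivWithin v (Icc 0 b) with hvd
  set W : ℝ → ℝ := fun t => ⟪ud t, v t⟫ - ⟪u t, vd t⟫ with hW
  have hWd : ∀ σ ∈ Icc 0 a, HasDerivWithinAt W 0 (Icc 0 a) σ := by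
    intro σ hσ
    have h1 : HasDerivWithinAt u (ud σ) (Icc 0 a) σ := sol_hasDeriv1 hu σ hσ
    have h2 : HasDerivWithinAt ud (-(R σ (u σ))) (Icc 0 a) σ := sol_hasDeriv2 ha hu hequ σ hσ
    have h3 : HasDerivWithinAt v (vd σ) (Icc 0 a) σ :=
      (sol_hasDeriv1 hv σ (hsub hσ)).mono hsub
    have h4 : HasDerivWithinAt vd (-(R σ (v σ))) (Icc 0 a) σ :=
      (sol_hasDeriv2 hb hv heqv σ (hsub hσ)).mono hsub
    have hA := (HasDerivWithinAt.inner ℝ h2 h3).sub (HasDerivWithinAt.inner ℝ h1 h4)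
    have hστ : σ ∈ Icc (0:ℝ) τ := Icc_subset_Icc le_rfl (hab.trans hbτ) hσ
    have : (⟪ud σ, vd σ⟫ + ⟪-(R σ (u σ)), v σ⟫) - (⟪u σ, -(R σ (v σ))⟫ + ⟪ud σ, vd σ⟫)
        = (0:ℝ) := by
      rw [inner_neg_left, inner_neg_right, hRsa σ hστ (u σ) (v σ)]
      ring
    rwa [this] at hA
  intro σ hσ
  have h0 : (0:ℝ) ∈ Icc (0:ℝ) a := ⟨le_rfl, ha.le⟩
  have := Convex.norm_image_sub_le_of_norm_hasDerivWithin_le (C := 0)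
    hWd (fun x _ => by simp) (convex_Icc 0 a) h0 hσ
  have hW0 : W 0 = 0 := by simp [hW, hu0, hv0]
  have : W σ = 0 := by
    rw [hW0] at this; simp at this
    simpa using this
  simpa [hW, sub_eq_zero] using this


/-- Two-sided Grönwall bound for solutions of `u'' + R u = 0`. -/
lemma sol_bound (hM : ∀ t ∈ Icc 0 τ, ‖R t‖ ≤ M) (haτ : a ≤ τ) (ha : 0 < a)
    (hu : ContDiffOn ℝ 2 u (Icc 0 a))
    (heq : ∀ t ∈ Icc 0 a,
      derivWithin (derivWithin u (Icc 0 a)) (Icc 0 a) t + R t (u t) = 0) :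
    ∀ t₁ ∈ Icc 0 a, ∀ t₂ ∈ Icc 0 a, t₁ ≤ t₂ →
      max ‖u t₂‖ ‖derivWithin u (Icc 0 a) t₂‖ ≤
        Real.exp (max 1 M * τ) * max ‖u t₁‖ ‖derivWithin u (Icc 0 a) t₁‖ ∧
      max ‖u t₁‖ ‖derivWithin u (Icc 0 a) t₁‖ ≤
        Real.exp (max 1 M * τ) * max ‖u t₂‖ ‖derivWithin u (Icc 0 a) t₂‖ := by
  intro t₁ h₁ t₂ h₂ h12
  set K := max 1 M with hK
  set g : ℝ → E × E := fun t => (u t, derivWithin u (Icc 0 a) t) with hg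
  set g' : ℝ → E × E := fun t => (derivWithin u (Icc 0 a) t, -(R t (u t))) with hg'
  have hsub : Icc t₁ t₂ ⊆ Icc 0 a := Icc_subset_Icc h₁.1 h₂.2
  have hgd : ∀ t ∈ Icc t₁ t₂, HasDerivWithinAt g (g' t) (Icc t₁ t₂) t := by
    intro t ht
    exact (((sol_hasDeriv1 hu) t (hsub ht)).prodMk
      ((sol_hasDeriv2 ha hu heq) t (hsub ht))).mono hsub
  have hgb : ∀ t ∈ Icc t₁ t₂, ‖g' t‖ ≤ K * ‖g t‖ := by
    intro t ht
    have htτ : t ∈ Icc 0 τ := Icc_subset_Icc le_rfl haτ (hsub ht)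
    have hM0 : (0:ℝ) ≤ M := le_trans (norm_nonneg _) (hM t htτ)
    have h1 : ‖derivWithin u (Icc 0 a) t‖ ≤ K * ‖g t‖ := by
      calc ‖derivWithin u (Icc 0 a) t‖ ≤ ‖g t‖ := by
            rw [hg]; exact le_max_right _ _
        _ ≤ K * ‖g t‖ := le_mul_of_one_le_left (norm_nonneg _) (le_max_left 1 M)
    have h2 : ‖-(R t (u t))‖ ≤ K * ‖g t‖ := by
      rw [norm_neg]
      calc ‖R t (u t)‖ ≤ M * ‖u t‖ := (R t).le_of_opNorm_le (hM t htτ) _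
        _ ≤ K * ‖g t‖ := by
            apply mul_le_mul (le_max_right 1 M) ?_ (norm_nonneg _)
              (le_trans hM0 (le_max_right 1 M))
            rw [hg]; exact le_max_left _ _
    calc ‖g' t‖ = max ‖derivWithin u (Icc 0 a) t‖ ‖-(R t (u t))‖ := by
          rw [hg']; rfl
      _ ≤ K * ‖g t‖ := max_le h1 h2
  have hexp : Real.exp (K * (t₂ - t₁)) ≤ Real.exp (K * τ) := by
    apply Real.exp_le_exp.2
    apply mul_le_mul_of_nonneg_left (by linarith [h₁.1, h₂.2]) (le_trans zero_le_one (le_max_left 1 M))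
  have hn : ∀ t, ‖g t‖ = max ‖u t‖ ‖derivWithin u (Icc 0 a) t‖ := fun t => rfl
  constructor
  · have := gron_fwd h12 hgd hgb
    rw [hn t₁, hn t₂] at this
    exact this.trans (mul_le_mul_of_nonneg_right hexp (le_max_of_le_left (norm_nonneg _)))
  · have := gron_bwd h12 hgd hgb
    rw [hn t₁, hn t₂] at this
    exact this.trans (mul_le_mul_of_nonneg_right hexp (le_max_of_le_left (norm_nonneg _)))

/-- Quadratic Taylor estimate for solutions with bounded values. -/
lemma sol_taylor {β : ℝ} (hM : ∀ t ∈ Icc 0 τ, ‖R t‖ ≤ M) (haτ : a ≤ τ) (ha : 0 < a)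
    (hu : ContDiffOn ℝ 2 u (Icc 0 a))
    (heq : ∀ t ∈ Icc 0 a,
      derivWithin (derivWithin u (Icc 0 a)) (Icc 0 a) t + R t (u t) = 0)
    (hβ : ∀ t ∈ Icc 0 a, ‖u t‖ ≤ β) :
    ∀ t₁ ∈ Icc 0 a, ∀ t₂ ∈ Icc 0 a,
      ‖u t₁ - u t₂ - (t₁ - t₂) • derivWithin u (Icc 0 a) t₂‖ ≤ M * β * (t₁ - t₂)^2 := by
  intro t₁ h₁ t₂ h₂
  set ud := derivWithin u (Icc 0 a) with hud
  have hβ0 : (0:ℝ) ≤ β := le_trans (norm_nonneg _) (hβ 0 ⟨le_rfl, ha.le⟩)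
  have hM0 : (0:ℝ) ≤ M :=
    le_trans (norm_nonneg _) (hM 0 ⟨le_rfl, ha.le.trans haτ⟩)
  -- u' is (M*β)-Lipschitz
  have hlip : ∀ x ∈ Icc 0 a, ∀ y ∈ Icc 0 a, ‖ud x - ud y‖ ≤ (M * β) * ‖x - y‖ := by
    intro x hx y hy
    refine Convex.norm_image_sub_le_of_norm_hasDerivWithin_le
      (f' := fun t => -(R t (u t))) (sol_hasDeriv2 ha hu heq) ?_ (convex_Icc 0 a) hy hx
    intro t ht
    rw [norm_neg]
    calc ‖R t (u t)‖ ≤ M * ‖u t‖ :=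
          (R t).le_of_opNorm_le (hM t (Icc_subset_Icc le_rfl haτ ht)) _
      _ ≤ M * β := mul_le_mul_of_nonneg_left (hβ t ht) hM0
  set I := Icc (min t₁ t₂) (max t₁ t₂) with hI
  have hIsub : I ⊆ Icc 0 a :=
    Icc_subset_Icc (le_min h₁.1 h₂.1) (max_le h₁.2 h₂.2)
  set φ : ℝ → E := fun t => u t - t • (ud t₂) with hφ
  have hφd : ∀ t ∈ I, HasDerivWithinAt φ (ud t - ud t₂) I t := by
    intro t ht
    exact ((sol_hasDeriv1 hu t (hIsub ht)).mono hIsub).sub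
      (((hasDerivAt_id t).smul_const (ud t₂)).hasDerivWithinAt.congr_deriv (one_smul _ _))
  have hbound : ∀ t ∈ I, ‖ud t - ud t₂‖ ≤ (M * β) * |t₁ - t₂| := by
    intro t ht
    have h1 : ‖ud t - ud t₂‖ ≤ (M * β) * ‖t - t₂‖ := hlip t (hIsub ht) t₂ (hIsub ⟨min_le_right _ _, le_max_right _ _⟩)
    have h2 : |t - t₂| ≤ |t₁ - t₂| := by
      have hmin := ht.1
      have hmax := ht.2
      rcases le_total t₁ t₂ with h | h
      · rw [inf_eq_left.mpr h] at hmin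
        rw [sup_eq_right.mpr h] at hmax
        rw [abs_sub_comm t₁ t₂, abs_of_nonpos (by linarith), abs_of_nonneg (by linarith)]
        linarith
      · rw [inf_eq_right.mpr h] at hmin
        rw [sup_eq_left.mpr h] at hmax
        rw [abs_of_nonneg (by linarith), abs_of_nonneg (by linarith)]
        linarith
    calc ‖ud t - ud t₂‖ ≤ (M * β) * |t - t₂| := by rwa [Real.norm_eq_abs] at h1
      _ ≤ (M * β) * |t₁ - t₂| := mul_le_mul_of_nonneg_left h2 (by positivity)
  have hmvt := Convex.norm_image_sub_le_of_norm_hasDerivWithin_le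
    hφd hbound (convex_Icc _ _)
    (⟨min_le_right _ _, le_max_right _ _⟩ : t₂ ∈ I)
    (⟨min_le_left _ _, le_max_left _ _⟩ : t₁ ∈ I)
  have hφeq : φ t₁ - φ t₂ = u t₁ - u t₂ - (t₁ - t₂) • ud t₂ := by
    simp [hφ, sub_smul]; abel
  rw [hφeq] at hmvt
  calc ‖u t₁ - u t₂ - (t₁ - t₂) • ud t₂‖ ≤ M * β * |t₁ - t₂| * ‖t₁ - t₂‖ := hmvt
    _ = M * β * (t₁ - t₂)^2 := by
        rw [Real.norm_eq_abs, mul_assoc, ← abs_mul, ← sq,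
          abs_of_nonneg (sq_nonneg _)]


/-- Key pairwise estimate between two conjugate-point solutions at `a < b`. -/
lemma key_pair
    (hRsa : ∀ t ∈ Icc (0:ℝ) τ, ∀ x y : E, ⟪R t x, y⟫ = ⟪x, R t y⟫)
    (hM : ∀ t ∈ Icc 0 τ, ‖R t‖ ≤ M)
    (ha : 0 < a) (hab : a < b) (hbτ : b ≤ τ)
    (hu : ContDiffOn ℝ 2 u (Icc 0 a))
    (hequ : ∀ t ∈ Icc 0 a,
      derivWithin (derivWithin u (Icc 0 a)) (Icc 0 a) t + R t (u t) = 0)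
    (hv : ContDiffOn ℝ 2 v (Icc 0 b))
    (heqv : ∀ t ∈ Icc 0 b,
      derivWithin (derivWithin v (Icc 0 b)) (Icc 0 b) t + R t (v t) = 0)
    (hu0 : u 0 = 0) (hua : u a = 0) (hv0 : v 0 = 0) (hvb : v b = 0) :
    |⟪derivWithin u (Icc 0 a) a, derivWithin v (Icc 0 b) b⟫| ≤
      (M * Real.exp (max 1 M * τ) ^ 2 * ‖derivWithin u (Icc 0 a) 0‖ *
        ‖derivWithin v (Icc 0 b) 0‖) * (b - a) := by
  set B := Real.exp (max 1 M * τ) with hB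
  have haτ : a ≤ τ := hab.le.trans hbτ
  have hb : (0:ℝ) < b := ha.trans hab
  set ud := derivWithin u (Icc 0 a) with hud
  set vd := derivWithin v (Icc 0 b) with hvd
  set nu := ‖ud 0‖ with hnu
  set nv := ‖vd 0‖ with hnv
  have hM0 : (0:ℝ) ≤ M := le_trans (norm_nonneg _) (hM 0 ⟨le_rfl, ha.le.trans haτ⟩)
  have hB0 : (0:ℝ) < B := Real.exp_pos _
  -- bound on ‖ud a‖
  have h1 := (sol_bound hM haτ ha hu hequ 0 ⟨le_rfl, ha.le⟩ a ⟨ha.le, le_rfl⟩ ha.le).1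
  rw [hu0, norm_zero, max_eq_right (norm_nonneg _)] at h1
  have hua' : ‖ud a‖ ≤ B * nu := le_trans (le_max_right _ _) h1
  -- bound on ‖v σ‖
  have hvβ : ∀ σ ∈ Icc 0 b, ‖v σ‖ ≤ B * nv := by
    intro σ hσ
    have h2 := (sol_bound hM hbτ hb hv heqv 0 ⟨le_rfl, hb.le⟩ σ hσ hσ.1).1
    rw [hv0, norm_zero, max_eq_right (norm_nonneg _)] at h2
    exact le_trans (le_max_left _ _) h2
  -- Taylor expansion of v around b, evaluated at a
  have htay := sol_taylor hM hbτ hb hv heqv hvβ a ⟨ha.le, hab.le⟩ b ⟨hb.le, le_rfl⟩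
  rw [hvb, sub_zero] at htay
  -- Wronskian at a
  have hw := sol_wronskian hRsa ha hab.le hbτ hu hequ hv heqv hu0 hv0 a ⟨ha.le, le_rfl⟩
  rw [hua, inner_zero_left] at hw
  -- combine
  have hsplit : (a - b) * ⟪ud a, vd b⟫ = -⟪ud a, v a - (a - b) • vd b⟫ := by
    rw [inner_sub_right, real_inner_smul_right, hw]
    ring
  have habs : (b - a) * |⟪ud a, vd b⟫| ≤ (B * nu) * (M * (B * nv) * (a - b)^2) := by
    have e1 : (b - a) * |⟪ud a, vd b⟫| = |(a - b) * ⟪ud a, vd b⟫| := by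
      rw [abs_mul, abs_of_neg (by linarith : a - b < 0)]
      ring
    rw [e1, hsplit, abs_neg]
    calc |⟪ud a, v a - (a - b) • vd b⟫| ≤ ‖ud a‖ * ‖v a - (a - b) • vd b‖ :=
          abs_real_inner_le_norm _ _
      _ ≤ (B * nu) * (M * (B * nv) * (a - b)^2) := by
          apply mul_le_mul hua' htay (norm_nonneg _)
          positivity
  have hba : (0:ℝ) < b - a := sub_pos.2 hab
  have habs' : (b - a) * |⟪ud a, vd b⟫| ≤
      (b - a) * ((M * B ^ 2 * nu * nv) * (b - a)) := by
    calc (b - a) * |⟪ud a, vd b⟫| ≤ (B * nu) * (M * (B * nv) * (a - b)^2) := habs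
      _ = (b - a) * ((M * B ^ 2 * nu * nv) * (b - a)) := by ring
  exact le_of_mul_le_mul_left habs' hba

/-- From a mutual-conjugacy witness, extract a normalized solution package. -/
lemma conj_pack (hM : ∀ t ∈ Icc 0 τ, ‖R t‖ ≤ M) {t : ℝ} (htτ : t ≤ τ)
    (hc : MutuallyConjugate R 0 t) :
    ∃ v : ℝ → E, ContDiffOn ℝ 2 v (Icc 0 t) ∧
      (∀ σ ∈ Icc 0 t,
        derivWithin (derivWithin v (Icc 0 t)) (Icc 0 t) σ + R σ (v σ) = 0) ∧
      v 0 = 0 ∧ v t = 0 ∧ 0 < ‖derivWithin v (Icc 0 t) 0‖ := by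
  obtain ⟨ht0, v, hv, heqv, hv0, hvt, t', ht', hvt'⟩ := hc
  refine ⟨v, hv, heqv, hv0, hvt, ?_⟩
  rcases eq_or_lt_of_le (norm_nonneg (derivWithin v (Icc 0 t) 0)) with h0 | h0
  · exfalso
    apply hvt'
    have hn : ‖derivWithin v (Icc 0 t) 0‖ = 0 := h0.symm
    have h2 := (sol_bound hM htτ ht0 hv heqv 0 ⟨le_rfl, ht0.le⟩ t' ht' ht'.1).1
    rw [hv0, norm_zero, hn, max_self, mul_zero] at h2
    have : ‖v t'‖ ≤ 0 := le_trans (le_max_left _ _) h2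
    simpa using le_antisymm this (norm_nonneg _)
  · exact h0

end

lemma seq_extract {t₀ : ℝ} {P : ℝ → Prop}
    (hP : ∀ δ, 0 < δ → ∃ x, |x - t₀| < δ ∧ x ≠ t₀ ∧ P x) :
    ∃ s : ℕ → ℝ, (∀ n, P (s n)) ∧ (∀ n, |s n - t₀| < 1/(n+1)) ∧
      (∀ k l, k < l → |s l - t₀| < |s k - t₀|) := by
  choose! f h1 h2 h3 using hP
  let step : ∀ (_ : ℕ), {x : ℝ // x ≠ t₀ ∧ P x} → {x : ℝ // x ≠ t₀ ∧ P x} :=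
    fun n prev =>
      have hδ : 0 < min (|prev.1 - t₀|) (1/(n+2)) :=
        lt_min (abs_sub_pos.mpr prev.2.1) (by positivity)
      ⟨f (min (|prev.1 - t₀|) (1/(n+2))), h2 _ hδ, h3 _ hδ⟩
  let S : ℕ → {x : ℝ // x ≠ t₀ ∧ P x} :=
    fun n => Nat.rec ⟨f 1, h2 1 one_pos, h3 1 one_pos⟩ step n
  have hdec : ∀ n : ℕ, |(S (n+1)).1 - t₀| < min (|(S n).1 - t₀|) (1/(n+2)) := by
    intro n
    have hδ : 0 < min (|(S n).1 - t₀|) (1/(n+2)) :=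
      lt_min (abs_sub_pos.mpr (S n).2.1) (by positivity)
    exact h1 _ hδ
  have hlt : ∀ n : ℕ, |(S n).1 - t₀| < 1/(n+1) := by
    intro n
    induction n with
    | zero =>
      have : (1:ℝ)/((0:ℕ)+1) = 1 := by norm_num
      rw [this]
      exact h1 1 one_pos
    | succ n _ =>
      calc |(S (n+1)).1 - t₀| < min (|(S n).1 - t₀|) (1/(n+2)) := hdec n
        _ ≤ 1/(n+2) := min_le_right _ _
        _ = 1/((n+1:ℕ)+1) := by push_cast; ring
  have hanti : StrictAnti (fun n => |(S n).1 - t₀|) :=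
    strictAnti_nat_of_succ_lt (fun n => lt_of_lt_of_le (hdec n) (min_le_left _ _))
  exact ⟨fun n => (S n).1, fun n => (S n).2.2, hlt, fun k l hkl => hanti hkl⟩

end ConjAux

/-- If `0` and `t₀ ∈ (0,τ]` are mutually conjugate, then for sufficiently small `ε > 0`,
`0` is not mutually conjugate to any `t ≠ t₀` in `[t₀-ε, t₀+ε] ∩ (0,τ]`. -/

theorem conjugate_points_isolated
    {E : Type*} [NormedAddCommGroup E] [InnerProductSpace ℝ E] [FiniteDimensional ℝ E]
    (τ : ℝ) (hτ : 0 < τ)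
    (R : ℝ → E →L[ℝ] E) (hRcont : ContinuousOn R (Set.Icc 0 τ))
    (hRsa : ∀ t ∈ Set.Icc (0:ℝ) τ, ∀ u v : E, ⟪R t u, v⟫ = ⟪u, R t v⟫)
    (t₀ : ℝ) (ht₀ : t₀ ∈ Set.Ioc (0:ℝ) τ) (hconj : MutuallyConjugate R 0 t₀) :
    ∃ ε > (0:ℝ), ∀ t ∈ Set.Icc (t₀ - ε) (t₀ + ε) ∩ Set.Ioc (0:ℝ) τ,
      t ≠ t₀ → ¬ MutuallyConjugate R 0 t := by
  by_contra hcon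
  push_neg at hcon
  obtain ⟨M, hM⟩ := isCompact_Icc.exists_bound_of_continuousOn hRcont
  have hM0 : (0:ℝ) ≤ M := le_trans (norm_nonneg _) (hM 0 ⟨le_rfl, hτ.le⟩)
  set B := Real.exp (max 1 M * τ) with hB
  have hB1 : (1:ℝ) ≤ B := Real.one_le_exp (by positivity)
  have hB0 : (0:ℝ) < B := lt_of_lt_of_le one_pos hB1
  -- a sequence of conjugate points accumulating at t₀
  have hP : ∀ δ, 0 < δ → ∃ x, |x - t₀| < δ ∧ x ≠ t₀ ∧
      (x ∈ Set.Ioc 0 τ ∧ MutuallyConjugate R 0 x) := by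
    intro δ hδ
    obtain ⟨t, ht, htne, htc⟩ := hcon (δ/2) (by positivity)
    refine ⟨t, ?_, htne, ht.2, htc⟩
    have h1 := ht.1.1
    have h2 := ht.1.2
    rw [abs_sub_lt_iff]
    constructor <;> linarith
  obtain ⟨s, hsP, hslt, hsanti⟩ := seq_extract hP
  have hsIoc : ∀ n, s n ∈ Set.Ioc 0 τ := fun n => (hsP n).1
  have hsC : ∀ n, MutuallyConjugate R 0 (s n) := fun n => (hsP n).2
  have hsne : ∀ k l : ℕ, k ≠ l → s k ≠ s l := by
    intro k l hkl heq
    rcases hkl.lt_or_gt with h | h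
    · have := hsanti k l h; rw [heq] at this; exact lt_irrefl _ this
    · have := hsanti l k h; rw [heq] at this; exact lt_irrefl _ this
  -- extract solutions
  have hsol := fun n => conj_pack hM (hsIoc n).2 (hsC n)
  choose v hv heqv hv0 hvs hnv using hsol
  set nn : ℕ → ℝ := fun n => ‖derivWithin (v n) (Set.Icc 0 (s n)) 0‖ with hnn
  set p : ℕ → E := fun n =>
    (nn n)⁻¹ • derivWithin (v n) (Set.Icc 0 (s n)) (s n) with hp
  have hnn0 : ∀ n, 0 < nn n := hnv
  have hmem : ∀ n, (0:ℝ) ∈ Set.Icc (0:ℝ) (s n) := fun n => ⟨le_rfl, (hsIoc n).1.le⟩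
  have hmem' : ∀ n, s n ∈ Set.Icc (0:ℝ) (s n) := fun n => ⟨(hsIoc n).1.le, le_rfl⟩
  -- upper and lower bounds on the endpoint derivative
  have hub : ∀ n, ‖derivWithin (v n) (Set.Icc 0 (s n)) (s n)‖ ≤ B * nn n := by
    intro n
    have h := (sol_bound hM (hsIoc n).2 (hsIoc n).1 (hv n) (heqv n)
      0 (hmem n) (s n) (hmem' n) (hsIoc n).1.le).1
    rw [hv0 n, norm_zero, max_eq_right (norm_nonneg _)] at h
    exact le_trans (le_max_right _ _) h
  have hlb : ∀ n, nn n ≤ B * ‖derivWithin (v n) (Set.Icc 0 (s n)) (s n)‖ := by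
    intro n
    have h := (sol_bound hM (hsIoc n).2 (hsIoc n).1 (hv n) (heqv n)
      0 (hmem n) (s n) (hmem' n) (hsIoc n).1.le).2
    rw [hv0 n, norm_zero, max_eq_right (norm_nonneg _), hvs n, norm_zero,
      max_eq_right (norm_nonneg _)] at h
    exact h
  have hpnorm : ∀ n, ‖p n‖ =
      (nn n)⁻¹ * ‖derivWithin (v n) (Set.Icc 0 (s n)) (s n)‖ := by
    intro n
    have h := norm_smul ((nn n)⁻¹) (derivWithin (v n) (Set.Icc 0 (s n)) (s n))
    rw [Real.norm_eq_abs, abs_of_pos (inv_pos.2 (hnn0 n))] at h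
    exact h
  have hpB : ∀ n, ‖p n‖ ≤ B := by
    intro n
    rw [hpnorm n, inv_mul_le_iff₀ (hnn0 n)]
    calc ‖derivWithin (v n) (Set.Icc 0 (s n)) (s n)‖ ≤ B * nn n := hub n
      _ = nn n * B := by ring
  have hpc : ∀ n, B⁻¹ ≤ ‖p n‖ := by
    intro n
    have hX : nn n / B ≤ ‖derivWithin (v n) (Set.Icc 0 (s n)) (s n)‖ := by
      rw [div_le_iff₀ hB0]
      calc nn n ≤ B * ‖derivWithin (v n) (Set.Icc 0 (s n)) (s n)‖ := hlb n
        _ = ‖derivWithin (v n) (Set.Icc 0 (s n)) (s n)‖ * B := by ring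
    rw [hpnorm n]
    calc B⁻¹ = (nn n)⁻¹ * (nn n / B) := by
          rw [div_eq_mul_inv, ← mul_assoc, inv_mul_cancel₀ (hnn0 n).ne', one_mul]
      _ ≤ (nn n)⁻¹ * ‖derivWithin (v n) (Set.Icc 0 (s n)) (s n)‖ :=
          mul_le_mul_of_nonneg_left hX (inv_nonneg.2 (hnn0 n).le)
  -- key pairwise estimate
  have hkey0 : ∀ k l, s k < s l → |⟪p k, p l⟫| ≤ (M * B^2) * (s l - s k) := by
    intro k l hkl
    have hkp := key_pair hRsa hM (hsIoc k).1 hkl (hsIoc l).2 (hv k) (heqv k)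
      (hv l) (heqv l) (hv0 k) (hvs k) (hv0 l) (hvs l)
    rw [← hB] at hkp
    have hinner : ⟪p k, p l⟫ = (nn k)⁻¹ * ((nn l)⁻¹ *
        ⟪derivWithin (v k) (Set.Icc 0 (s k)) (s k),
         derivWithin (v l) (Set.Icc 0 (s l)) (s l)⟫) := by
      rw [hp, real_inner_smul_left, real_inner_smul_right]
    have habs : |⟪p k, p l⟫| = (nn k)⁻¹ * ((nn l)⁻¹ *
        |⟪derivWithin (v k) (Set.Icc 0 (s k)) (s k),
          derivWithin (v l) (Set.Icc 0 (s l)) (s l)⟫|) := by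
      rw [hinner, abs_mul, abs_mul, abs_of_pos (inv_pos.2 (hnn0 k)),
        abs_of_pos (inv_pos.2 (hnn0 l))]
    rw [habs]
    have h2 : (nn k)⁻¹ * ((nn l)⁻¹ *
        |⟪derivWithin (v k) (Set.Icc 0 (s k)) (s k),
          derivWithin (v l) (Set.Icc 0 (s l)) (s l)⟫|) ≤
        (nn k)⁻¹ * ((nn l)⁻¹ * ((M * B ^ 2 * nn k * nn l) * (s l - s k))) := by
      apply mul_le_mul_of_nonneg_left _ (inv_nonneg.2 (hnn0 k).le)
      exact mul_le_mul_of_nonneg_left hkp (inv_nonneg.2 (hnn0 l).le)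
    refine h2.trans (le_of_eq ?_)
    have hk0 : nn k ≠ 0 := (hnn0 k).ne'
    have hl0 : nn l ≠ 0 := (hnn0 l).ne'
    field_simp
  have hkey : ∀ k l : ℕ, k ≠ l →
      |⟪p k, p l⟫| ≤ (M * B^2) * (1/(k+1) + 1/(l+1)) := by
    intro k l hkl
    have hd : |s k - s l| ≤ 1/(k+1) + 1/(l+1) := by
      calc |s k - s l| ≤ |s k - t₀| + |t₀ - s l| := abs_sub_le _ _ _
        _ = |s k - t₀| + |s l - t₀| := by rw [abs_sub_comm t₀ (s l)]
        _ ≤ 1/(k+1) + 1/(l+1) := add_le_add (hslt k).le (hslt l).le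
    have hMB : (0:ℝ) ≤ M * B^2 := by positivity
    rcases lt_trichotomy (s k) (s l) with h | h | h
    · refine (hkey0 k l h).trans (mul_le_mul_of_nonneg_left ?_ hMB)
      have : s l - s k ≤ |s k - s l| := by
        rw [abs_sub_comm]; exact le_abs_self _
      linarith
    · exact absurd h (hsne k l hkl)
    · have h' := hkey0 l k h
      rw [real_inner_comm (p k) (p l)] at h'
      refine h'.trans (mul_le_mul_of_nonneg_left ?_ hMB)
      have : s k - s l ≤ |s k - s l| := le_abs_self _
      linarith
  -- compactness: extract a convergent subsequence
  have hball : ∀ n, p n ∈ Metric.closedBall (0:E) B := fun n => by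
    rw [Metric.mem_closedBall, dist_zero_right]; exact hpB n
  obtain ⟨q, -, φ, hφ, hφtend⟩ :=
    (isCompact_closedBall (0:E) B).tendsto_subseq hball
  have hcomp : Filter.Tendsto (fun l : ℕ => (1:ℝ)/(φ l+1)) Filter.atTop (nhds 0) :=
    tendsto_one_div_add_atTop_nhds_zero_nat.comp hφ.tendsto_atTop
  have hIk : ∀ k, |⟪p (φ k), q⟫| ≤ (M * B^2) * (1/(φ k+1)) := by
    intro k
    have hft : Filter.Tendsto (fun l => |⟪p (φ k), p (φ l)⟫|) Filter.atTop
        (nhds |⟪p (φ k), q⟫|) :=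
      (Filter.Tendsto.inner tendsto_const_nhds hφtend).abs
    have hgt : Filter.Tendsto (fun l : ℕ => (M * B^2) * (1/(φ k+1) + 1/(φ l+1)))
        Filter.atTop (nhds ((M * B^2) * (1/(φ k+1) + 0))) :=
      tendsto_const_nhds.mul (tendsto_const_nhds.add hcomp)
    rw [add_zero] at hgt
    refine le_of_tendsto_of_tendsto hft hgt ?_
    filter_upwards [Filter.eventually_gt_atTop k] with l hl
    exact hkey (φ k) (φ l) (hφ.injective.ne (ne_of_lt hl))
  have hqq : |⟪q, q⟫| ≤ 0 := by
    have hft : Filter.Tendsto (fun k => |⟪p (φ k), q⟫|) Filter.atTop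
        (nhds |⟪q, q⟫|) :=
      (Filter.Tendsto.inner hφtend tendsto_const_nhds).abs
    have hgt : Filter.Tendsto (fun k : ℕ => (M * B^2) * (1/(φ k+1)))
        Filter.atTop (nhds ((M * B^2) * 0)) :=
      tendsto_const_nhds.mul hcomp
    rw [mul_zero] at hgt
    exact le_of_tendsto_of_tendsto hft hgt (Filter.Eventually.of_forall hIk)
  have hq0 : q = 0 := inner_self_eq_zero.mp (abs_nonpos_iff.mp hqq)
  have hqlb : B⁻¹ ≤ ‖q‖ :=
    ge_of_tendsto hφtend.norm (Filter.Eventually.of_forall fun k => hpc (φ k))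
  rw [hq0, norm_zero] at hqlb
  have hBinv : (0:ℝ) < B⁻¹ := inv_pos.2 hB0
  linarith
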